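/- Let λ₀ = 1, λⱼ = 2^{-2^j} for j ≥ 1, and for a finitely supported sequence α = (αⱼ) with αⱼ ∈ {0,1} set x_α = Σ_{j≥1} αⱼ(1-λⱼ)λ₀···λ_{j-1}. If x_α < x_β then there exists j ≥ 1 with βⱼ - αⱼ = 1 and αₘ = βₘ for all m < j. -/

import Mathlib

open scoped Classical

/-- `λ₀ = 1`, `λⱼ = 2^{-2^j}` for `j ≥ 1`. -/
noncomputable def lamSeq (j : ℕ) : ℝ := if j = 0 then 1 else ((2 : ℝ) ^ (2 ^ j))⁻¹

/-- `λ₀ λ₁ ⋯ λ_{m-1}`. -/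
noncomputable def lamProd (m : ℕ) : ℝ := ∏ i ∈ Finset.range m, lamSeq i

/-- `x_α = Σ_{j ≥ 1} αⱼ (1-λⱼ) λ₀⋯λ_{j-1}`. -/
noncomputable def xPoint (α : ℕ → ℕ) : ℝ :=
  ∑' j : ℕ, if 1 ≤ j then (α j : ℝ) * (1 - lamSeq j) * lamProd j else 0

/-- A finitely supported `0`-`1` sequence (indexed by `j ≥ 1`). -/
def BinSeq (α : ℕ → ℕ) : Prop := (∀ j, α j ≤ 1) ∧ ∃ N, ∀ j, N ≤ j → α j = 0

lemma lamSeq_pos (j : ℕ) : 0 < lamSeq j := by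
  unfold lamSeq; split <;> positivity

lemma lamSeq_le_one (j : ℕ) : lamSeq j ≤ 1 := by
  unfold lamSeq; split
  · exact le_rfl
  · rw [inv_le_one_iff₀]
    right
    exact one_le_pow₀ (by norm_num)

lemma lamSeq_lt_half (j : ℕ) (hj : 1 ≤ j) : lamSeq j < 1/2 := by
  unfold lamSeq
  rw [if_neg (by omega)]
  rw [inv_lt_comm₀ (by positivity) (by norm_num)]
  have : (2:ℝ) = 2 ^ (1:ℕ) := by norm_num
  calc (1/2 : ℝ)⁻¹ = 2 ^ (1:ℕ) := by norm_num
    _ < 2 ^ (2^j) := by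
        apply pow_lt_pow_right₀ (by norm_num)
        have := Nat.one_lt_two_pow_iff.mpr (by omega : j ≠ 0)
        omega

lemma lamProd_pos (m : ℕ) : 0 < lamProd m :=
  Finset.prod_pos fun i _ => lamSeq_pos i

lemma lamProd_succ (m : ℕ) : lamProd (m+1) = lamProd m * lamSeq m :=
  Finset.prod_range_succ _ _

lemma term_eq (m : ℕ) : (1 - lamSeq m) * lamProd m = lamProd m - lamProd (m+1) := by
  rw [lamProd_succ]; ring

lemma term_nonneg (m : ℕ) : 0 ≤ (1 - lamSeq m) * lamProd m :=
  mul_nonneg (by linarith [lamSeq_le_one m]) (lamProd_pos m).le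

/-- tail bound -/
lemma tail_le (γ : ℕ → ℕ) (hγ : ∀ m, γ m ≤ 1) (j N : ℕ) :
    ∑ m ∈ Finset.Ico (j+1) N,
      (if 1 ≤ m then (γ m : ℝ) * (1 - lamSeq m) * lamProd m else 0) ≤ lamProd (j+1) := by
  rcases le_or_gt N (j+1) with hN | hN
  · rw [Finset.Ico_eq_empty (by omega)]
    simpa using (lamProd_pos (j+1)).le
  · have key : ∀ K, j+1 ≤ K → ∑ m ∈ Finset.Ico (j+1) K,
        (if 1 ≤ m then (γ m : ℝ) * (1 - lamSeq m) * lamProd m else 0)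
          ≤ lamProd (j+1) - lamProd K := by
      intro K hK
      induction K, hK using Nat.le_induction with
      | base => simp
      | succ K hK ih =>
        rw [Finset.sum_Ico_succ_top hK]
        have h1 : (if 1 ≤ K then (γ K : ℝ) * (1 - lamSeq K) * lamProd K else 0)
            ≤ lamProd K - lamProd (K+1) := by
          rw [← term_eq]
          split
          · have : (γ K : ℝ) ≤ 1 := by exact_mod_cast hγ K
            calc (γ K : ℝ) * (1 - lamSeq K) * lamProd K
                ≤ 1 * ((1 - lamSeq K) * lamProd K) := by
                  rw [mul_assoc]
                  exact mul_le_mul_of_nonneg_right this (term_nonneg K)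
              _ = (1 - lamSeq K) * lamProd K := one_mul _
          · exact term_nonneg K
        linarith
    linarith [key N hN.le, lamProd_pos N]

lemma xPoint_eq_sum (γ : ℕ → ℕ) (N : ℕ) (hN : ∀ m, N ≤ m → γ m = 0) :
    xPoint γ = ∑ m ∈ Finset.range N,
      (if 1 ≤ m then (γ m : ℝ) * (1 - lamSeq m) * lamProd m else 0) := by
  apply tsum_eq_sum
  intro b hb
  rw [hN b (by simpa [Finset.mem_range, not_lt] using hb)]
  simp

/-- If `x_α < x_β` then there is `j ≥ 1` with `βⱼ - αⱼ = 1` and `αₘ = βₘ` for `m < j`. -/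
theorem first_difference (α β : ℕ → ℕ) (hα : BinSeq α) (hβ : BinSeq β)
    (h : xPoint α < xPoint β) :
    ∃ j : ℕ, 1 ≤ j ∧ β j = 1 ∧ α j = 0 ∧ ∀ m, 1 ≤ m → m < j → α m = β m := by
  obtain ⟨hα1, Nα, hNα⟩ := hα
  obtain ⟨hβ1, Nβ, hNβ⟩ := hβ
  -- there is an index where they differ
  have hex : ∃ j, 1 ≤ j ∧ α j ≠ β j := by
    by_contra hc
    push_neg at hc
    have : xPoint α = xPoint β := by
      unfold xPoint
      apply tsum_congr
      intro m
      by_cases hm : 1 ≤ m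
      · rw [hc m hm]
      · simp [hm]
    exact absurd this (ne_of_lt h)
  classical
  let j := Nat.find hex
  obtain ⟨hj1, hjne⟩ : 1 ≤ j ∧ α j ≠ β j := Nat.find_spec hex
  have hmin : ∀ m, 1 ≤ m → m < j → α m = β m := by
    intro m h1 h2
    by_contra hc
    have : Nat.find hex ≤ m := Nat.find_le ⟨h1, hc⟩
    omega
  refine ⟨j, hj1, ?_⟩
  -- two cases on values at j
  have hcases : (α j = 0 ∧ β j = 1) ∨ (α j = 1 ∧ β j = 0) := by
    have := hα1 j; have := hβ1 j; omega
  rcases hcases with ⟨ha, hb⟩ | ⟨ha, hb⟩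
  · exact ⟨hb, ha, hmin⟩
  · -- contradiction: xPoint β < xPoint α
    exfalso
    set N := max (max Nα Nβ) (j+1) with hNdef
    have hNα' : ∀ m, N ≤ m → α m = 0 := fun m hm => hNα m (by omega)
    have hNβ' : ∀ m, N ≤ m → β m = 0 := fun m hm => hNβ m (by omega)
    have hjN : j + 1 ≤ N := le_max_right _ _
    set f : (ℕ → ℕ) → ℕ → ℝ :=
      fun γ m => if 1 ≤ m then (γ m : ℝ) * (1 - lamSeq m) * lamProd m else 0 with hf
    have hsumα : xPoint α = ∑ m ∈ Finset.range N, f α m := xPoint_eq_sum α N hNα'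
    have hsumβ : xPoint β = ∑ m ∈ Finset.range N, f β m := xPoint_eq_sum β N hNβ'
    have hsplitα : ∑ m ∈ Finset.range N, f α m
        = ∑ m ∈ Finset.range (j+1), f α m + ∑ m ∈ Finset.Ico (j+1) N, f α m := by
      rw [Finset.range_eq_Ico, ← Finset.sum_Ico_consecutive _ (by omega : 0 ≤ j+1) hjN, Finset.range_eq_Ico]
    have hsplitβ : ∑ m ∈ Finset.range N, f β m
        = ∑ m ∈ Finset.range (j+1), f β m + ∑ m ∈ Finset.Ico (j+1) N, f β m := by
      rw [Finset.range_eq_Ico, ← Finset.sum_Ico_consecutive _ (by omega : 0 ≤ j+1) hjN, Finset.range_eq_Ico]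
    have hheadα : ∑ m ∈ Finset.range (j+1), f α m
        = ∑ m ∈ Finset.range j, f α m + f α j := Finset.sum_range_succ _ _
    have hheadβ : ∑ m ∈ Finset.range (j+1), f β m
        = ∑ m ∈ Finset.range j, f β m + f β j := Finset.sum_range_succ _ _
    have hcommon : ∑ m ∈ Finset.range j, f α m = ∑ m ∈ Finset.range j, f β m := by
      apply Finset.sum_congr rfl
      intro m hm
      rw [Finset.mem_range] at hm
      by_cases h1 : 1 ≤ m
      · simp only [hf, hmin m h1 hm]
      · simp [hf, h1]
    have hfαj : f α j = (1 - lamSeq j) * lamProd j := by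
      simp [hf, hj1, ha]
    have hfβj : f β j = 0 := by simp [hf, hb]
    have htailβ : ∑ m ∈ Finset.Ico (j+1) N, f β m ≤ lamProd (j+1) := tail_le β hβ1 j N
    have htailα : 0 ≤ ∑ m ∈ Finset.Ico (j+1) N, f α m := by
      apply Finset.sum_nonneg
      intro m hm
      simp only [hf]
      split
      · exact mul_nonneg (mul_nonneg (Nat.cast_nonneg _)
          (by linarith [lamSeq_le_one m])) (lamProd_pos m).le
      · exact le_rfl
    have hstep : lamProd (j+1) < (1 - lamSeq j) * lamProd j := by
      rw [lamProd_succ]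
      have h2 := lamSeq_lt_half j hj1
      have h3 := lamProd_pos j
      nlinarith
    have : xPoint β < xPoint α := by
      rw [hsumα, hsumβ, hsplitα, hsplitβ, hheadα, hheadβ, hcommon, hfαj, hfβj]
      linarith
    linarith
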